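/- arXiv:2405.04733 — 5 statements merged into one kernel-verified Lean document; each statement's English description precedes it below -/
import Mathlib

section
/- Let $I_{m,k}$ denote the maximal number of (open) orthants in $\mathbb{R}^m$ intersected by a $k$-dimensional affine subspace, with $1 \le k \le m$. Then $I_{m,k} \le (em/k)^k$. -/
open Finset Real

open Finset

lemma geomB (m k : ℕ) (V : AffineSubspace ℝ (EuclideanSpace ℝ (Fin m)))
    (hV : Module.finrank ℝ V.direction = k) (s : Finset (Fin m))
    (h : ∀ t ⊆ s, ∃ x ∈ (V : Set (EuclideanSpace ℝ (Fin m))),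
      (∀ i ∈ t, 0 < x i) ∧ (∀ i ∈ s, i ∉ t → x i < 0)) :
    s.card ≤ k := by
  by_contra hlt
  push_neg at hlt
  classical
  let L : EuclideanSpace ℝ (Fin m) →ₗ[ℝ] EuclideanSpace ℝ ↥s :=
    (WithLp.linearEquiv 2 ℝ (↥s → ℝ)).symm.toLinearMap ∘ₗ
      LinearMap.funLeft ℝ ℝ ((↑) : ↥s → Fin m) ∘ₗ (WithLp.linearEquiv 2 ℝ (Fin m → ℝ)).toLinearMap
  set W : Submodule ℝ (EuclideanSpace ℝ ↥s) := V.direction.map L with hWdef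
  have hW : Module.finrank ℝ W ≤ k := hV ▸ Submodule.finrank_map_le L V.direction
  have hWne : W ≠ ⊤ := by
    intro hTop
    rw [hTop, finrank_top, finrank_euclideanSpace, Fintype.card_coe] at hW
    omega
  have horth : Wᗮ ≠ ⊥ := by
    simpa [Submodule.orthogonal_eq_bot_iff] using hWne
  obtain ⟨c, hcW, hc0⟩ := Submodule.exists_mem_ne_zero_of_ne_bot horth
  have hker : ∀ w ∈ V.direction, ∑ i : ↥s, c i * w i.val = 0 := by
    intro w hw
    have : (inner ℝ (L w) c : ℝ) = 0 :=
      (Submodule.mem_orthogonal W c).1 hcW (L w) ⟨w, hw, rfl⟩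
    simpa [PiLp.inner_apply, RCLike.inner_apply, mul_comm, L,
      LinearMap.funLeft_apply] using this
  -- positive / negative index sets
  let up : Finset (Fin m) := (univ.filter fun i : ↥s => 0 < c i).image Subtype.val
  let un : Finset (Fin m) := (univ.filter fun i : ↥s => c i < 0).image Subtype.val
  have hup : ∀ (i : ↥s), i.val ∈ up ↔ 0 < c i := by
    intro i
    simp only [up, mem_image, mem_filter, mem_univ, true_and]
    exact ⟨fun ⟨j, hj, hji⟩ => Subtype.ext hji ▸ hj, fun hi => ⟨i, hi, rfl⟩⟩
  have hun : ∀ (i : ↥s), i.val ∈ un ↔ c i < 0 := by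
    intro i
    simp only [un, mem_image, mem_filter, mem_univ, true_and]
    exact ⟨fun ⟨j, hj, hji⟩ => Subtype.ext hji ▸ hj, fun hi => ⟨i, hi, rfl⟩⟩
  have hups : up ⊆ s := by
    intro i hi
    simp only [up, mem_image] at hi
    obtain ⟨j, _, rfl⟩ := hi; exact j.2
  have huns : un ⊆ s := by
    intro i hi
    simp only [un, mem_image] at hi
    obtain ⟨j, _, rfl⟩ := hi; exact j.2
  obtain ⟨x, hxV, hxp, hxn⟩ := h up hups
  obtain ⟨y, hyV, hyp, hyn⟩ := h un huns
  obtain ⟨j, hj⟩ : ∃ j : ↥s, c j ≠ 0 := by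
    by_contra hall
    push_neg at hall
    exact hc0 (by ext i; exact hall i)
  have htx : ∀ i : ↥s, 0 ≤ c i * x i.val := by
    intro i
    rcases lt_trichotomy (c i) 0 with hc | hc | hc
    · have hx : x i.val < 0 := hxn i.val i.2 (fun hmem => absurd ((hup i).1 hmem) (by linarith))
      nlinarith
    · simp [hc]
    · have hx : 0 < x i.val := hxp i.val ((hup i).2 hc)
      positivity
  have htxj : 0 < c j * x j.val := by
    rcases hj.lt_or_gt with hc | hc
    · have hx : x j.val < 0 := hxn j.val j.2 (fun hmem => absurd ((hup j).1 hmem) (by linarith))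
      exact mul_pos_of_neg_of_neg hc hx
    · exact mul_pos hc (hxp j.val ((hup j).2 hc))
  have hsumx : 0 < ∑ i : ↥s, c i * x i.val :=
    Finset.sum_pos' (fun i _ => htx i) ⟨j, mem_univ j, htxj⟩
  have hty : ∀ i : ↥s, 0 ≤ -(c i * y i.val) := by
    intro i
    rcases lt_trichotomy (c i) 0 with hc | hc | hc
    · have hy : 0 < y i.val := hyp i.val ((hun i).2 hc)
      nlinarith
    · simp [hc]
    · have hy : y i.val < 0 := hyn i.val i.2 (fun hmem => absurd ((hun i).1 hmem) (by linarith))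
      nlinarith
  have htyj : 0 < -(c j * y j.val) := by
    rcases hj.lt_or_gt with hc | hc
    · have hy : 0 < y j.val := hyp j.val ((hun j).2 hc)
      nlinarith
    · have hy : y j.val < 0 := hyn j.val j.2 (fun hmem => absurd ((hun j).1 hmem) (by linarith))
      nlinarith
  have hsumy : ∑ i : ↥s, c i * y i.val < 0 := by
    have h0 : 0 < ∑ i : ↥s, -(c i * y i.val) :=
      Finset.sum_pos' (fun i _ => hty i) ⟨j, mem_univ j, htyj⟩
    rw [Finset.sum_neg_distrib] at h0
    linarith
  have hdiff := hker (x -ᵥ y) (AffineSubspace.vsub_mem_direction hxV hyV)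
  have heq : ∑ i : ↥s, c i * x i.val - ∑ i : ↥s, c i * y i.val = 0 := by
    rw [← Finset.sum_sub_distrib]
    have : ∀ i : ↥s, c i * x i.val - c i * y i.val = c i * (x -ᵥ y) i.val := by
      intro i
      show _ = c i * (x i.val - y i.val)
      ring
    rw [Finset.sum_congr rfl (fun i _ => this i)]
    exact hdiff
  linarith

lemma sumA (m k : ℕ) (hk : 1 ≤ k) (hkm : k ≤ m) :
    (∑ i ∈ Iic k, (m.choose i : ℝ)) ≤ (Real.exp 1 * m / k) ^ k := by
  have hm : 0 < (m : ℝ) := by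
    have : 0 < m := by omega
    exact_mod_cast this
  have hk' : 0 < (k : ℝ) := by exact_mod_cast hk
  set r : ℝ := k / m with hr
  have hr0 : 0 < r := by positivity
  have hr1 : r ≤ 1 := by
    rw [hr, div_le_one hm]; exact_mod_cast hkm
  have key : (∑ i ∈ Iic k, (m.choose i : ℝ)) * r ^ k ≤ Real.exp 1 ^ k := by
    have h1 : (∑ i ∈ Iic k, (m.choose i : ℝ)) * r ^ k
        ≤ ∑ i ∈ Iic k, (m.choose i : ℝ) * r ^ i := by
      rw [Finset.sum_mul]
      apply Finset.sum_le_sum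
      intro i hi
      have : r ^ k ≤ r ^ i :=
        pow_le_pow_of_le_one hr0.le hr1 (mem_Iic.1 hi)
      have hpos : (0:ℝ) ≤ m.choose i := by positivity
      nlinarith
    have h2 : ∑ i ∈ Iic k, (m.choose i : ℝ) * r ^ i
        ≤ ∑ i ∈ range (m + 1), (m.choose i : ℝ) * r ^ i := by
      apply Finset.sum_le_sum_of_subset_of_nonneg
      · intro i hi
        rw [mem_range]; rw [mem_Iic] at hi; omega
      · intro i _ _; positivity
    have h3 : ∑ i ∈ range (m + 1), (m.choose i : ℝ) * r ^ i = (r + 1) ^ m := by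
      rw [add_pow]
      apply Finset.sum_congr rfl
      intro i _
      simp [mul_comm]
    have h4 : (r + 1) ^ m ≤ Real.exp 1 ^ k := by
      have h5 : (r + 1) ^ m ≤ Real.exp r ^ m := by
        apply pow_le_pow_left₀ (by linarith) (by linarith [Real.add_one_le_exp r])
      refine h5.trans (le_of_eq ?_)
      rw [← Real.exp_nat_mul, ← Real.exp_nat_mul]
      congr 1
      rw [hr]
      field_simp
    linarith
  have hrk : 0 < r ^ k := by positivity
  have hrepr : (Real.exp 1 * m / k : ℝ) = Real.exp 1 / r := by
    rw [hr]; field_simp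
  rw [hrepr, div_pow, le_div_iff₀ hrk]
  exact key



/-- The open orthant of `ℝ^m` corresponding to the sign pattern `ε`. -/
def orthant (m : ℕ) (ε : Fin m → Bool) : Set (EuclideanSpace ℝ (Fin m)) :=
  {u | ∀ i, if ε i then 0 < u i else u i < 0}

/-- The number of open orthants of `ℝ^m` intersected by a `k`-dimensional affine
subspace (`1 ≤ k ≤ m`) is at most `(e m / k)^k`. -/
theorem stmt0 (m k : ℕ) (hk : 1 ≤ k) (hkm : k ≤ m)
    (V : AffineSubspace ℝ (EuclideanSpace ℝ (Fin m)))
    (hV : Module.finrank ℝ V.direction = k) :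
    (Nat.card {ε : Fin m → Bool //
        (orthant m ε ∩ (V : Set (EuclideanSpace ℝ (Fin m)))).Nonempty} : ℝ)
      ≤ (Real.exp 1 * m / k) ^ k := by
  classical
  set P : (Fin m → Bool) → Prop :=
    fun ε => (orthant m ε ∩ (V : Set (EuclideanSpace ℝ (Fin m)))).Nonempty with hP
  set F : Finset (Fin m → Bool) := univ.filter P with hF
  set 𝒜 : Finset (Finset (Fin m)) :=
    F.image (fun ε => univ.filter fun i => ε i = true) with h𝒜
  have hinj : Function.Injective (fun ε : Fin m → Bool =>
      (univ.filter fun i => ε i = true : Finset (Fin m))) := by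
    intro ε ε' hee
    funext i
    have : (i ∈ univ.filter fun i => ε i = true) ↔
        (i ∈ univ.filter fun i => ε' i = true) := by
      simp only at hee
      rw [hee]
    simp only [mem_filter, mem_univ, true_and] at this
    rcases Bool.eq_false_or_eq_true (ε i) with h | h <;>
      rcases Bool.eq_false_or_eq_true (ε' i) with h' | h' <;>
      simp_all
  have hcard1 : Nat.card {ε : Fin m → Bool // P ε} = F.card := by
    rw [Nat.card_eq_fintype_card, Fintype.card_subtype]
  have hcard2 : F.card = 𝒜.card := (Finset.card_image_of_injective F hinj).symm
  -- VC dimension bound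
  have hvc : ∀ t ∈ 𝒜.shatterer, t.card ≤ k := by
    intro t ht
    rw [mem_shatterer] at ht
    apply geomB m k V hV t
    intro u hu
    obtain ⟨a, ha𝒜, hat⟩ := ht hu
    rw [h𝒜, mem_image] at ha𝒜
    obtain ⟨ε, hεF, rfl⟩ := ha𝒜
    rw [hF, mem_filter] at hεF
    obtain ⟨x, hxo, hxV⟩ := hεF.2
    refine ⟨x, hxV, fun i hi => ?_, fun i hit hiu => ?_⟩
    · have : i ∈ t ∩ univ.filter (fun i => ε i = true) := hat ▸ hi
      have hε : ε i = true := by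
        simp only [mem_inter, mem_filter, mem_univ, true_and] at this
        exact this.2
      have := hxo i
      rwa [hε, if_pos rfl] at this
    · have hna : i ∉ univ.filter (fun i => ε i = true) := by
        intro hia
        exact hiu (hat ▸ mem_inter.2 ⟨hit, hia⟩)
      have hε : ε i = false := by
        simp only [mem_filter, mem_univ, true_and] at hna
        exact Bool.eq_false_iff.2 hna
      have := hxo i
      rwa [hε, if_neg (by simp)] at this
  have hvcle : 𝒜.vcDim ≤ k := Finset.sup_le hvc
  -- counting chain
  have hchain : (𝒜.card : ℕ) ≤ ∑ i ∈ Iic k, m.choose i := by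
    calc 𝒜.card ≤ 𝒜.shatterer.card := Finset.card_le_card_shatterer 𝒜
    _ ≤ ∑ i ∈ Iic 𝒜.vcDim, (Fintype.card (Fin m)).choose i :=
        Finset.card_shatterer_le_sum_vcDim
    _ ≤ ∑ i ∈ Iic k, m.choose i := by
        rw [Fintype.card_fin]
        exact Finset.sum_le_sum_of_subset (Iic_subset_Iic.2 hvcle)
  calc (Nat.card {ε : Fin m → Bool // P ε} : ℝ) = (𝒜.card : ℝ) := by
        rw [hcard1, hcard2]
    _ ≤ (∑ i ∈ Iic k, (m.choose i : ℝ)) := by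
        rw [← Nat.cast_sum]
        exact_mod_cast hchain
    _ ≤ (Real.exp 1 * m / k) ^ k := sumA m k hk hkm
end

section
/- Let $0 < \alpha \le \beta$ and let $\mathbf{u}, \mathbf{v} \in \mathbb{R}^n$ satisfy $\alpha \le \|\mathbf{u}\|_2, \|\mathbf{v}\|_2 \le \beta$. Define $\mathrm{dist}(\mathbf{u},\mathbf{v}) = \min\{\|\mathbf{u}-\mathbf{v}\|_2, \|\mathbf{u}+\mathbf{v}\|_2\}$. Then $\tfrac{1}{2\beta}\|\mathbf{u}\mathbf{u}^\top - \mathbf{v}\mathbf{v}^\top\|_F \le \mathrm{dist}(\mathbf{u},\mathbf{v}) \le \tfrac{1}{\alpha}\|\mathbf{u}\mathbf{u}^\top - \mathbf{v}\mathbf{v}^\top\|_F$. -/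
/-- For `u, v` with norms in `[α, β]` (`0 < α ≤ β`), the phaseless distance
`dist(u,v) = min(‖u-v‖, ‖u+v‖)` is equivalent to the Frobenius norm of
`u uᵀ - v vᵀ`:  `(2β)⁻¹ ‖uuᵀ - vvᵀ‖_F ≤ dist(u,v) ≤ α⁻¹ ‖uuᵀ - vvᵀ‖_F`. -/
theorem stmt5 (n : ℕ) (α β : ℝ) (hα : 0 < α) (hαβ : α ≤ β)
    (u v : EuclideanSpace ℝ (Fin n))
    (hu1 : α ≤ ‖u‖) (hu2 : ‖u‖ ≤ β) (hv1 : α ≤ ‖v‖) (hv2 : ‖v‖ ≤ β) :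
    (1 / (2 * β)) * Real.sqrt (∑ i, ∑ j, (u i * u j - v i * v j) ^ 2)
        ≤ min ‖u - v‖ ‖u + v‖ ∧
      min ‖u - v‖ ‖u + v‖
        ≤ (1 / α) * Real.sqrt (∑ i, ∑ j, (u i * u j - v i * v j) ^ 2) := by
  set S := ∑ i, ∑ j, (u i * u j - v i * v j) ^ 2 with hSdef
  set A := ‖u - v‖ with hAdef
  set B := ‖u + v‖ with hBdef
  have hinner : ∀ (x y : EuclideanSpace ℝ (Fin n)), (inner ℝ x y : ℝ) = ∑ i, x i * y i := by
    intro x y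
    simp [PiLp.inner_apply, RCLike.inner_apply, conj_trivial, mul_comm]
  set a : ℝ := ‖u‖ ^ 2 with hadef
  set b : ℝ := ‖v‖ ^ 2 with hbdef
  set t : ℝ := inner ℝ u v with htdef
  -- value of S
  have hS : S = a ^ 2 + b ^ 2 - 2 * t ^ 2 := by
    have h1 : ∀ i, ∑ j, (u i * u j - v i * v j) ^ 2
        = (u i * u i) * (∑ j, u j * u j) + (v i * v i) * (∑ j, v j * v j)
          - 2 * (u i * v i) * (∑ j, u j * v j) := by
      intro i
      rw [Finset.mul_sum, Finset.mul_sum, Finset.mul_sum, ← Finset.sum_add_distrib,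
        ← Finset.sum_sub_distrib]
      exact Finset.sum_congr rfl fun j _ => by ring
    have h2 : S = (∑ i, u i * u i) * (∑ j, u j * u j)
        + (∑ i, v i * v i) * (∑ j, v j * v j)
        - (∑ i, 2 * (u i * v i)) * (∑ j, u j * v j) := by
      rw [hSdef]
      simp only [h1]
      rw [Finset.sum_sub_distrib, Finset.sum_add_distrib, ← Finset.sum_mul, ← Finset.sum_mul,
        ← Finset.sum_mul]
    have h3 : (∑ i, 2 * (u i * v i)) = 2 * ∑ i, u i * v i := by
      rw [Finset.mul_sum]
    have hau : a = ∑ i, u i * u i := by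
      rw [hadef, ← real_inner_self_eq_norm_sq, hinner]
    have hbv : b = ∑ i, v i * v i := by
      rw [hbdef, ← real_inner_self_eq_norm_sq, hinner]
    have htv : t = ∑ i, u i * v i := by rw [htdef, hinner]
    rw [h2, h3, ← hau, ← hbv, ← htv]; ring
  have hA2 : A ^ 2 = a - 2 * t + b := by
    rw [hAdef, hadef, hbdef, htdef, norm_sub_sq_real]
  have hB2 : B ^ 2 = a + 2 * t + b := by
    rw [hBdef, hadef, hbdef, htdef, norm_add_sq_real]
  have hSkey : S = (1/2) * (A ^ 2 * B ^ 2) + (1/2) * (a - b) ^ 2 := by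
    rw [hS, hA2, hB2]; ring
  -- Cauchy-Schwarz : (a - b)^2 ≤ A^2 B^2
  have hcs : (a - b) ^ 2 ≤ A ^ 2 * B ^ 2 := by
    have h1 : a - b = inner ℝ (u - v) (u + v) := by
      rw [inner_sub_left, inner_add_right, inner_add_right, hadef, hbdef,
        ← real_inner_self_eq_norm_sq u, ← real_inner_self_eq_norm_sq v,
        real_inner_comm v u]
      ring
    have h2 : |(inner ℝ (u - v) (u + v) : ℝ)| ≤ A * B := abs_real_inner_le_norm _ _
    calc (a - b) ^ 2 = |(inner ℝ (u - v) (u + v) : ℝ)| ^ 2 := by rw [← h1, sq_abs]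
      _ ≤ (A * B) ^ 2 := by
          apply pow_le_pow_left₀ (abs_nonneg _) h2
      _ = A ^ 2 * B ^ 2 := by ring
  have hA0 : 0 ≤ A := norm_nonneg _
  have hB0 : 0 ≤ B := norm_nonneg _
  have haα : α ^ 2 ≤ a := by rw [hadef]; exact pow_le_pow_left₀ hα.le hu1 2
  have hbα : α ^ 2 ≤ b := by rw [hbdef]; exact pow_le_pow_left₀ hα.le hv1 2
  have hAβ : A ≤ 2 * β := by
    calc A ≤ ‖u‖ + ‖v‖ := norm_sub_le u v
      _ ≤ 2 * β := by linarith
  have hBβ : B ≤ 2 * β := by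
    calc B ≤ ‖u‖ + ‖v‖ := norm_add_le u v
      _ ≤ 2 * β := by linarith
  have hpar : A ^ 2 + B ^ 2 = 2 * a + 2 * b := by rw [hA2, hB2]; ring
  have hβ : (0:ℝ) < 2 * β := by linarith
  clear_value S A B a b t
  clear hSdef hAdef hBdef hadef hbdef htdef hinner hS hA2 hB2
  constructor
  · -- lower bound
    rw [one_div, inv_mul_le_iff₀ hβ]
    have h1 : S ≤ (A * B) ^ 2 := by nlinarith [hcs]
    have h2 : Real.sqrt S ≤ A * B := by
      calc Real.sqrt S ≤ Real.sqrt ((A * B) ^ 2) := Real.sqrt_le_sqrt h1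
        _ = A * B := Real.sqrt_sq (mul_nonneg hA0 hB0)
    rcases le_total A B with h | h
    · rw [min_eq_left h]
      calc Real.sqrt S ≤ A * B := h2
        _ ≤ A * (2 * β) := mul_le_mul_of_nonneg_left hBβ hA0
        _ = 2 * β * A := by ring
    · rw [min_eq_right h]
      calc Real.sqrt S ≤ A * B := h2
        _ ≤ 2 * β * B := mul_le_mul_of_nonneg_right hAβ hB0
  · -- upper bound
    rw [one_div, ← div_eq_inv_mul, le_div_iff₀ hα]
    have hS0 : 0 ≤ S := by rw [hSkey]; positivity
    have hm0 : 0 ≤ min A B * α := mul_nonneg (le_min hA0 hB0) hα.le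
    rw [Real.le_sqrt hm0 hS0]
    rcases le_total A B with h | h
    · rw [min_eq_left h]
      have hAB : A ^ 2 ≤ B ^ 2 := pow_le_pow_left₀ hA0 h 2
      have hB2α : 2 * α ^ 2 ≤ B ^ 2 := by linarith
      nlinarith [mul_nonneg (sq_nonneg A) (sub_nonneg.2 hB2α), sq_nonneg (a - b)]
    · rw [min_eq_right h]
      have hAB : B ^ 2 ≤ A ^ 2 := pow_le_pow_left₀ hB0 h 2
      have hA2α : 2 * α ^ 2 ≤ A ^ 2 := by linarith
      nlinarith [mul_nonneg (sq_nonneg B) (sub_nonneg.2 hA2α), sq_nonneg (a - b)]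
end

section
/- Let $\tau > 0$ and let $\mathbf{a}$ be a standard Gaussian random vector in $\mathbb{R}^n$. For any $\mathbf{u},\mathbf{v} \in \mathbb{R}^n$ with $\mathbf{u} \ne \mathbf{v}$, the 'double separation probability' $\mathsf{P}^{(2)}_{\mathbf{u},\mathbf{v}} = \mathbb{P}\big(\mathrm{sign}(|\mathbf{a}^\top\mathbf{u}|-\tau) \ne \mathrm{sign}(|\mathbf{a}^\top\mathbf{v}|-\tau) \text{ and } \mathrm{sign}(\mathbf{a}^\top\mathbf{u}) \ne \mathrm{sign}(\mathbf{a}^\top\mathbf{v})\big)$ satisfies $\mathsf{P}^{(2)}_{\mathbf{u},\mathbf{v}} \le 4\exp\big(-\tau^2/(2\|\mathbf{u}-\mathbf{v}\|_2^2)\big)$. -/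
open MeasureTheory ProbabilityTheory

section Aux

open Real ENNReal

lemma aux_lintegral_pi_prod : ∀ {n : ℕ} (μ : Measure ℝ) [SigmaFinite μ]
    (f : Fin n → ℝ → ℝ≥0∞), (∀ i, Measurable (f i)) →
    ∫⁻ a : Fin n → ℝ, ∏ i, f i (a i) ∂(Measure.pi fun _ => μ) = ∏ i, ∫⁻ x, f i x ∂μ := by
  intro n
  induction n with
  | zero =>
    intro μ _ f hf
    simp [lintegral_const, Measure.pi_empty_univ]
  | succ n ih =>
    intro μ _ f hf
    have key := (measurePreserving_piFinSuccAbove (fun _ : Fin (n+1) => μ) 0).lintegral_comp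
      (f := fun p : ℝ × (Fin n → ℝ) => f 0 p.1 * ∏ j, f (Fin.succ j) (p.2 j))
      (((hf 0).comp measurable_fst).mul
        (Finset.measurable_prod _ fun j _ =>
          (hf (Fin.succ j)).comp ((measurable_pi_apply j).comp measurable_snd)))
    calc ∫⁻ a : Fin (n+1) → ℝ, ∏ i, f i (a i) ∂(Measure.pi fun _ => μ)
        = ∫⁻ a : Fin (n+1) → ℝ,
            f 0 (a 0) * ∏ j : Fin n, f (Fin.succ j) (a ((0 : Fin (n+1)).succAbove j))
              ∂(Measure.pi fun _ => μ) := by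
          refine lintegral_congr fun a => ?_
          rw [Fin.prod_univ_succ]
          refine congrArg _ (Finset.prod_congr rfl fun j _ => ?_)
          rw [Fin.zero_succAbove]
      _ = ∫⁻ p : ℝ × (Fin n → ℝ), f 0 p.1 * ∏ j, f (Fin.succ j) (p.2 j)
            ∂(μ.prod (Measure.pi fun _ => μ)) := key
      _ = (∫⁻ x, f 0 x ∂μ) * ∫⁻ y : Fin n → ℝ, ∏ j, f (Fin.succ j) (y j)
            ∂(Measure.pi fun _ => μ) := by
          exact lintegral_prod_mul (hf 0).aemeasurable
            (Finset.measurable_prod _ fun j _ =>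
              (hf (Fin.succ j)).comp (measurable_pi_apply j)).aemeasurable
      _ = (∫⁻ x, f 0 x ∂μ) * ∏ j : Fin n, ∫⁻ x, f (Fin.succ j) x ∂μ := by
          rw [ih μ _ fun j => hf (Fin.succ j)]
      _ = ∏ i, ∫⁻ x, f i x ∂μ := by rw [Fin.prod_univ_succ]

lemma aux_lintegral_exp_gaussian (c : ℝ) :
    ∫⁻ x, ENNReal.ofReal (Real.exp (c * x)) ∂(gaussianReal 0 1)
      = ENNReal.ofReal (Real.exp (c ^ 2 / 2)) := by
  have hmeas : Measurable fun x : ℝ => ENNReal.ofReal (Real.exp (c * x)) := by fun_prop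
  rw [gaussianReal_of_var_ne_zero 0 one_ne_zero,
    lintegral_withDensity_eq_lintegral_mul _ (measurable_gaussianPDF 0 1) hmeas]
  have heq : ∀ x : ℝ, (gaussianPDF 0 1 * fun x => ENNReal.ofReal (Real.exp (c * x))) x
      = ENNReal.ofReal (Real.exp (c ^ 2 / 2)) * ENNReal.ofReal (gaussianPDFReal c 1 x) := by
    intro x
    simp only [Pi.mul_apply, gaussianPDF]
    rw [← ENNReal.ofReal_mul (gaussianPDFReal_nonneg 0 1 x),
      ← ENNReal.ofReal_mul (Real.exp_nonneg _)]
    congr 1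
    simp only [gaussianPDFReal]
    have hexp : Real.exp (-(x - 0) ^ 2 / (2 * ((1 : NNReal) : ℝ))) * Real.exp (c * x)
        = Real.exp (c ^ 2 / 2) * Real.exp (-(x - c) ^ 2 / (2 * ((1 : NNReal) : ℝ))) := by
      rw [← Real.exp_add, ← Real.exp_add]
      congr 1
      push_cast
      ring
    rw [mul_assoc, hexp]
    ring
  simp_rw [heq]
  rw [lintegral_const_mul _ (measurable_gaussianPDFReal c 1).ennreal_ofReal,
    lintegral_gaussianPDFReal_eq_one c one_ne_zero, mul_one]

lemma aux_chernoff {n : ℕ} (c : Fin n → ℝ) :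
    ∫⁻ a : Fin n → ℝ, ENNReal.ofReal (Real.exp (∑ i, c i * a i))
        ∂(Measure.pi fun _ : Fin n => gaussianReal 0 1)
      = ENNReal.ofReal (Real.exp ((∑ i, c i ^ 2) / 2)) := by
  have h1 : ∀ a : Fin n → ℝ, ENNReal.ofReal (Real.exp (∑ i, c i * a i))
      = ∏ i, ENNReal.ofReal (Real.exp (c i * a i)) := by
    intro a
    rw [Real.exp_sum, ← ENNReal.ofReal_prod_of_nonneg]
    intro i _
    exact Real.exp_nonneg _
  simp_rw [h1]
  rw [aux_lintegral_pi_prod (gaussianReal 0 1)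
    (fun i x => ENNReal.ofReal (Real.exp (c i * x))) (fun i => by fun_prop)]
  simp_rw [aux_lintegral_exp_gaussian]
  rw [← ENNReal.ofReal_prod_of_nonneg (fun i _ => Real.exp_nonneg _), ← Real.exp_sum,
    Finset.sum_div]

/-- One-sided Gaussian tail bound via Chernoff. -/
lemma aux_tail {n : ℕ} (w : Fin n → ℝ) (hw : 0 < ∑ i, w i ^ 2) (τ : ℝ) (hτ : 0 < τ) :
    (Measure.pi fun _ : Fin n => gaussianReal 0 1) {a | τ ≤ ∑ i, w i * a i}
      ≤ ENNReal.ofReal (Real.exp (-τ ^ 2 / (2 * ∑ i, w i ^ 2))) := by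
  set σ2 : ℝ := ∑ i, w i ^ 2 with hσ2
  set t : ℝ := τ / σ2 with ht
  have htpos : 0 < t := div_pos hτ hw
  set μ := Measure.pi fun _ : Fin n => gaussianReal 0 1 with hμ
  have hmeas : AEMeasurable
      (fun a : Fin n → ℝ => ENNReal.ofReal (Real.exp (∑ i, (t * w i) * a i))) μ := by
    refine Measurable.aemeasurable ?_
    exact (measurable_exp.comp (Finset.measurable_sum _ fun i _ =>
      (measurable_pi_apply i).const_mul _)).ennreal_ofReal
  have hmarkov := mul_meas_ge_le_lintegral₀ hmeas (ENNReal.ofReal (Real.exp (t * τ)))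
  rw [aux_chernoff (fun i => t * w i)] at hmarkov
  have hsub : {a : Fin n → ℝ | τ ≤ ∑ i, w i * a i}
      ⊆ {a : Fin n → ℝ | ENNReal.ofReal (Real.exp (t * τ))
          ≤ ENNReal.ofReal (Real.exp (∑ i, (t * w i) * a i))} := by
    intro a ha
    simp only [Set.mem_setOf_eq] at ha ⊢
    apply ENNReal.ofReal_le_ofReal
    apply Real.exp_le_exp.mpr
    have : ∑ i, (t * w i) * a i = t * ∑ i, w i * a i := by
      rw [Finset.mul_sum]; exact Finset.sum_congr rfl fun i _ => by ring
    rw [this]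
    exact mul_le_mul_of_nonneg_left ha htpos.le
  have h1 : ENNReal.ofReal (Real.exp (t * τ)) * μ {a | τ ≤ ∑ i, w i * a i}
      ≤ ENNReal.ofReal (Real.exp ((∑ i, (t * w i) ^ 2) / 2)) :=
    le_trans (mul_le_mul_right (measure_mono hsub) _) hmarkov
  have hE2 : (∑ i, (t * w i) ^ 2) = t ^ 2 * σ2 := by
    rw [hσ2, Finset.mul_sum]
    exact Finset.sum_congr rfl fun i _ => by ring
  rw [hE2] at h1
  have hne : ENNReal.ofReal (Real.exp (t * τ)) ≠ 0 := by
    simp [Real.exp_pos]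
  have hnetop : ENNReal.ofReal (Real.exp (t * τ)) ≠ ⊤ := ENNReal.ofReal_ne_top
  have h2 : μ {a | τ ≤ ∑ i, w i * a i}
      ≤ ENNReal.ofReal (Real.exp (t ^ 2 * σ2 / 2)) / ENNReal.ofReal (Real.exp (t * τ)) :=
    (ENNReal.le_div_iff_mul_le (Or.inl hne) (Or.inl hnetop)).mpr
      (by rwa [mul_comm] at h1)
  refine h2.trans ?_
  rw [← ENNReal.ofReal_div_of_pos (Real.exp_pos _), ← Real.exp_sub]
  apply ENNReal.ofReal_le_ofReal
  apply Real.exp_le_exp.mpr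
  have hσ2ne : σ2 ≠ 0 := hw.ne'
  have : t ^ 2 * σ2 / 2 - t * τ = -τ ^ 2 / (2 * σ2) := by
    rw [ht]
    field_simp
    ring
  exact le_of_eq this

lemma aux_sep {x y τ : ℝ} (hτ : 0 < τ)
    (h1 : Real.sign (|x| - τ) ≠ Real.sign (|y| - τ))
    (h2 : Real.sign x ≠ Real.sign y) : τ ≤ |x - y| := by
  have hxy : x * y ≤ 0 := by
    by_contra h
    push_neg at h
    rcases mul_pos_iff.mp h with ⟨hx, hy⟩ | ⟨hx, hy⟩
    · exact h2 (by rw [Real.sign_of_pos hx, Real.sign_of_pos hy])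
    · exact h2 (by rw [Real.sign_of_neg hx, Real.sign_of_neg hy])
  have hmax : τ ≤ |x| ∨ τ ≤ |y| := by
    by_contra h
    push_neg at h
    exact h1 (by rw [Real.sign_of_neg (by linarith [h.1]), Real.sign_of_neg (by linarith [h.2])])
  rcases le_or_gt x 0 with hx | hx <;> rcases le_or_gt y 0 with hy | hy
  · rcases hmax with h | h
    · rw [abs_of_nonpos hx] at h
      have hy0 : y = 0 := by nlinarith
      rw [hy0, sub_zero, abs_of_nonpos hx]; exact h
    · rw [abs_of_nonpos hy] at h
      have hx0 : x = 0 := by nlinarith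
      rw [hx0, zero_sub, abs_neg, abs_of_nonpos hy]; exact h
  · rcases hmax with h | h
    · rw [abs_of_nonpos hx] at h
      rw [abs_of_nonpos (by linarith)]; linarith
    · rw [abs_of_pos hy] at h
      rw [abs_of_nonpos (by linarith)]; linarith
  · rcases hmax with h | h
    · rw [abs_of_pos hx] at h
      rw [abs_of_nonneg (by linarith)]; linarith
    · rw [abs_of_nonpos hy] at h
      rw [abs_of_nonneg (by linarith)]; linarith
  · nlinarith

end Aux

/-- Double separation probability bound: for a standard Gaussian vector `a` in `ℝⁿ`,
`τ > 0` and `u ≠ v`, the probability that `u, v` are separated both by the phaseless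
hyperplane `{|aᵀ·| = τ}` and by the hyperplane `{aᵀ· = 0}` is at most
`4 exp(-τ²/(2‖u-v‖²))`. -/
theorem stmt9 (n : ℕ) (τ : ℝ) (hτ : 0 < τ)
    (u v : EuclideanSpace ℝ (Fin n)) (huv : u ≠ v) :
    (Measure.pi fun _ : Fin n => gaussianReal 0 1)
        {a : Fin n → ℝ |
          Real.sign (|∑ i, a i * u i| - τ) ≠ Real.sign (|∑ i, a i * v i| - τ) ∧
          Real.sign (∑ i, a i * u i) ≠ Real.sign (∑ i, a i * v i)}
      ≤ ENNReal.ofReal (4 * Real.exp (-τ ^ 2 / (2 * ‖u - v‖ ^ 2))) := by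
  set w : Fin n → ℝ := fun i => u i - v i with hw
  have hwnorm : ‖u - v‖ ^ 2 = ∑ i, w i ^ 2 := by
    rw [EuclideanSpace.norm_eq, Real.sq_sqrt (by positivity)]
    refine Finset.sum_congr rfl fun i _ => ?_
    rw [Real.norm_eq_abs, sq_abs]
    rfl
  have hwpos : 0 < ∑ i, w i ^ 2 := by
    rw [← hwnorm]
    have hne : u - v ≠ 0 := sub_ne_zero.mpr huv
    exact pow_pos (norm_pos_iff.mpr hne) 2
  set μ := Measure.pi fun _ : Fin n => gaussianReal 0 1 with hμ
  have hsub : {a : Fin n → ℝ |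
          Real.sign (|∑ i, a i * u i| - τ) ≠ Real.sign (|∑ i, a i * v i| - τ) ∧
          Real.sign (∑ i, a i * u i) ≠ Real.sign (∑ i, a i * v i)}
      ⊆ {a : Fin n → ℝ | τ ≤ ∑ i, w i * a i} ∪ {a : Fin n → ℝ | τ ≤ ∑ i, (-w i) * a i} := by
    intro a ⟨h1, h2⟩
    have hkey : τ ≤ |(∑ i, a i * u i) - ∑ i, a i * v i| := aux_sep hτ h1 h2
    have hdiff : (∑ i, a i * u i) - ∑ i, a i * v i = ∑ i, w i * a i := by
      rw [← Finset.sum_sub_distrib]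
      refine Finset.sum_congr rfl fun i _ => ?_
      show a i * u i - a i * v i = (u i - v i) * a i
      ring
    rw [hdiff] at hkey
    rcases abs_cases (∑ i, w i * a i) with ⟨he, _⟩ | ⟨he, _⟩
    · left; rw [Set.mem_setOf_eq, ← he]; exact hkey
    · right
      rw [Set.mem_setOf_eq]
      have hns : ∑ i, (-w i) * a i = -∑ i, w i * a i := by
        rw [← Finset.sum_neg_distrib]
        exact Finset.sum_congr rfl fun i _ => by ring
      rw [hns, ← he]; exact hkey
  calc μ _ ≤ μ ({a : Fin n → ℝ | τ ≤ ∑ i, w i * a i}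
        ∪ {a : Fin n → ℝ | τ ≤ ∑ i, (-w i) * a i}) := measure_mono hsub
    _ ≤ μ {a : Fin n → ℝ | τ ≤ ∑ i, w i * a i}
        + μ {a : Fin n → ℝ | τ ≤ ∑ i, (-w i) * a i} := measure_union_le _ _
    _ ≤ ENNReal.ofReal (Real.exp (-τ ^ 2 / (2 * ∑ i, w i ^ 2)))
        + ENNReal.ofReal (Real.exp (-τ ^ 2 / (2 * ∑ i, (-w i) ^ 2))) :=
        add_le_add (aux_tail w hwpos τ hτ) (aux_tail (fun i => -w i) (by simpa using hwpos) τ hτ)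
    _ ≤ ENNReal.ofReal (4 * Real.exp (-τ ^ 2 / (2 * ‖u - v‖ ^ 2))) := by
        have hnw : ∑ i, (-w i) ^ 2 = ∑ i, w i ^ 2 :=
          Finset.sum_congr rfl fun i _ => by ring
        rw [hnw, ← ENNReal.ofReal_add (Real.exp_nonneg _) (Real.exp_nonneg _), hwnorm]
        apply ENNReal.ofReal_le_ofReal
        linarith [Real.exp_nonneg (-τ ^ 2 / (2 * ∑ i, w i ^ 2))]
end

section
/- Fix $\tau > 0$, $\theta > 0$, a vector $\mathbf{a} \in \mathbb{R}^n$, and points $\mathbf{u},\mathbf{v},\mathbf{p},\mathbf{q} \in \mathbb{R}^n$. Suppose the phaseless hyperplane $\{|\mathbf{a}^\top\cdot| = \tau\}$ $\theta$-well-separates $\mathbf{u}$ and $\mathbf{v}$, meaning: (i) $\mathrm{sign}(|\mathbf{a}^\top\mathbf{u}|-\tau) \ne \mathrm{sign}(|\mathbf{a}^\top\mathbf{v}|-\tau)$, and (ii) $||\mathbf{a}^\top\mathbf{u}|-\tau| \ge \theta\,d$ and $||\mathbf{a}^\top\mathbf{v}|-\tau| \ge \theta\,d$, where $d = \min\{\|\mathbf{u}-\mathbf{v}\|_2,\|\mathbf{u}+\mathbf{v}\|_2\}$.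 If furthermore $\min\{|\mathbf{a}^\top(\mathbf{p}-\mathbf{u})|, |\mathbf{a}^\top(\mathbf{p}+\mathbf{u})|\} < \theta d / 2$ and $\min\{|\mathbf{a}^\top(\mathbf{q}-\mathbf{v})|, |\mathbf{a}^\top(\mathbf{q}+\mathbf{v})|\} < \theta d / 2$, then $\mathrm{sign}(|\mathbf{a}^\top\mathbf{p}|-\tau) \ne \mathrm{sign}(|\mathbf{a}^\top\mathbf{q}|-\tau)$, i.e., $\mathbf{p}$ and $\mathbf{q}$ are separated by the phaseless hyperplane. -/
open scoped RealInnerProductSpace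

/-- `sgn t = 1` if `t ≥ 0` and `-1` otherwise. -/
noncomputable def sgn (t : ℝ) : ℝ := if 0 ≤ t then 1 else -1

lemma sgn_stable (x y c ε : ℝ) (hε : 0 < ε) (hw : 2 * ε ≤ |x - c|)
    (hclose : |y - x| < ε) : sgn (y - c) = sgn (x - c) := by
  unfold sgn
  rcases abs_cases (x - c) with ⟨h1, h2⟩ | ⟨h1, h2⟩ <;>
    rcases abs_cases (y - x) with ⟨g1, g2⟩ | ⟨g1, g2⟩ <;>
    split_ifs with h3 h4 <;> first | rfl | linarith

lemma abs_abs_close (x y : ℝ) (ε : ℝ) (h : min |y - x| |y + x| < ε) :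
    |(|y| - |x|)| < ε := by
  rcases min_cases |y - x| |y + x| with ⟨he, _⟩ | ⟨he, _⟩ <;> rw [he] at h
  · exact lt_of_le_of_lt (abs_abs_sub_abs_le_abs_sub y x) h
  · calc |(|y| - |x|)| = |(|y| - |(-x)|)| := by rw [abs_neg]
      _ ≤ |y - (-x)| := abs_abs_sub_abs_le_abs_sub y (-x)
      _ = |y + x| := by ring_nf
      _ < ε := h

/-- Stability of `θ`-well-separation: if the phaseless hyperplane `{|aᵀ·| = τ}`
`θ`-well-separates `u` and `v` (with `d = min(‖u-v‖, ‖u+v‖)`), and `p` (resp. `q`)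
is close to `u` (resp. `v`) in the sense that
`min(|aᵀ(p-u)|, |aᵀ(p+u)|) < θd/2` and `min(|aᵀ(q-v)|, |aᵀ(q+v)|) < θd/2`,
then the phaseless hyperplane separates `p` and `q`. -/
theorem stmt11 (n : ℕ) (τ θ : ℝ) (hτ : 0 < τ) (hθ : 0 < θ)
    (a u v p q : EuclideanSpace ℝ (Fin n)) (d : ℝ)
    (hd : d = min ‖u - v‖ ‖u + v‖)
    (hsep : sgn (|⟪a, u⟫| - τ) ≠ sgn (|⟪a, v⟫| - τ))
    (hwu : θ * d ≤ abs (|⟪a, u⟫| - τ)) (hwv : θ * d ≤ abs (|⟪a, v⟫| - τ))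
    (hp : min |⟪a, p - u⟫| |⟪a, p + u⟫| < θ * d / 2)
    (hq : min |⟪a, q - v⟫| |⟪a, q + v⟫| < θ * d / 2) :
    sgn (|⟪a, p⟫| - τ) ≠ sgn (|⟪a, q⟫| - τ) := by
  have hε : 0 < θ * d / 2 := lt_of_le_of_lt (le_min (abs_nonneg _) (abs_nonneg _)) hp
  rw [inner_sub_right, inner_add_right] at hp hq
  have hp' := abs_abs_close ⟪a, u⟫ ⟪a, p⟫ _ hp
  have hq' := abs_abs_close ⟪a, v⟫ ⟪a, q⟫ _ hq
  have e1 : sgn (|⟪a, p⟫| - τ) = sgn (|⟪a, u⟫| - τ) :=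
    sgn_stable _ _ _ _ hε (by linarith) hp'
  have e2 : sgn (|⟪a, q⟫| - τ) = sgn (|⟪a, v⟫| - τ) :=
    sgn_stable _ _ _ _ hε (by linarith) hq'
  rw [e1, e2]; exact hsep
end

section
/- Let $\tau > 0$, define $g(a,b) = \sqrt{2/\pi}\,\exp\big(-\frac{\tau^2}{2(a^2+b^2)}\big)\frac{\tau^2 a^2 + b^2(a^2+b^2)}{(a^2+b^2)^{5/2}}$ and $h(a,b) = \sqrt{2/\pi}\,\exp\big(-\frac{\tau^2}{2(a^2+b^2)}\big)\frac{ab(a^2+b^2-\tau^2)}{(a^2+b^2)^{5/2}}$, and set $\eta = \sqrt{\pi e / 2}\,\tau$ and $F(a,b) = \sqrt{(1-\eta g(a,b))^2 + (\eta h(a,b))^2}$. Then for $0 < \alpha \le \beta$, $\sup_{a^2+b^2 \in [\alpha^2,\beta^2]} F(a,b) = \max\Big\{\max_{w \in [\tau/\beta, \tau/\alpha]} \big|1 - w^3 e^{(1-w^2)/2}\big|,\ \max_{w \in [\tau/\beta, \tau/\alpha]} \big|1 - w\, e^{(1-w^2)/2}\big|\Big\}$. -/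
/-- The function `g_η(a,b)` from the step-size analysis (with threshold `τ`). -/
noncomputable def gfun (τ a b : ℝ) : ℝ :=
  Real.sqrt (2 / Real.pi) * Real.exp (-τ ^ 2 / (2 * (a ^ 2 + b ^ 2))) *
    ((τ ^ 2 * a ^ 2 + b ^ 2 * (a ^ 2 + b ^ 2)) / Real.sqrt ((a ^ 2 + b ^ 2) ^ 5))

/-- The function `h_η(a,b)` from the step-size analysis (with threshold `τ`). -/
noncomputable def hfun (τ a b : ℝ) : ℝ :=
  Real.sqrt (2 / Real.pi) * Real.exp (-τ ^ 2 / (2 * (a ^ 2 + b ^ 2))) *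
    (a * b * (a ^ 2 + b ^ 2 - τ ^ 2) / Real.sqrt ((a ^ 2 + b ^ 2) ^ 5))

/-- `F(a,b) = √((1 - η g(a,b))² + (η h(a,b))²)` with `η = √(πe/2) τ`. -/
noncomputable def Ffun (τ a b : ℝ) : ℝ :=
  Real.sqrt ((1 - Real.sqrt (Real.pi * Real.exp 1 / 2) * τ * gfun τ a b) ^ 2
    + (Real.sqrt (Real.pi * Real.exp 1 / 2) * τ * hfun τ a b) ^ 2)

open Real Set


lemma sqrt_const_mul : Real.sqrt (Real.pi * Real.exp 1 / 2) * Real.sqrt (2 / Real.pi)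
    = Real.exp (1/2) := by
  rw [← Real.sqrt_mul (by positivity)]
  rw [show Real.pi * Real.exp 1 / 2 * (2 / Real.pi) = Real.exp 1 by
    field_simp]
  exact (Real.exp_half 1).symm

lemma eta_g (τ a b : ℝ) (h : 0 < a ^ 2 + b ^ 2) :
    Real.sqrt (Real.pi * Real.exp 1 / 2) * τ * gfun τ a b
      = Real.exp ((1 - (τ / Real.sqrt (a ^ 2 + b ^ 2)) ^ 2) / 2) *
          ((τ / Real.sqrt (a ^ 2 + b ^ 2)) ^ 3 * (a ^ 2 / (a ^ 2 + b ^ 2))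
            + (τ / Real.sqrt (a ^ 2 + b ^ 2)) * (b ^ 2 / (a ^ 2 + b ^ 2))) := by
  set r := Real.sqrt (a ^ 2 + b ^ 2) with hrdef
  have hr2 : r ^ 2 = a ^ 2 + b ^ 2 := Real.sq_sqrt h.le
  have hrpos : 0 < r := Real.sqrt_pos.mpr h
  have h5 : Real.sqrt ((a ^ 2 + b ^ 2) ^ 5) = r ^ 5 := by
    rw [show (a ^ 2 + b ^ 2) ^ 5 = (r ^ 5) ^ 2 by rw [← hr2]; ring,
      Real.sqrt_sq (by positivity)]
  have hexp : Real.exp ((1 - (τ / r) ^ 2) / 2)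
      = Real.exp (1/2) * Real.exp (-τ ^ 2 / (2 * (a ^ 2 + b ^ 2))) := by
    rw [← Real.exp_add]
    congr 1
    rw [← hr2]
    field_simp
    ring
  rw [gfun, hexp, h5, ← hr2]
  rw [show Real.sqrt (Real.pi * Real.exp 1 / 2) * τ *
      (Real.sqrt (2 / Real.pi) * Real.exp (-τ ^ 2 / (2 * (r ^ 2))) *
        ((τ ^ 2 * a ^ 2 + b ^ 2 * r ^ 2) / r ^ 5))
    = (Real.sqrt (Real.pi * Real.exp 1 / 2) * Real.sqrt (2 / Real.pi)) *
        Real.exp (-τ ^ 2 / (2 * (r ^ 2))) * (τ * (τ ^ 2 * a ^ 2 + b ^ 2 * r ^ 2) / r ^ 5) by ring,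
    sqrt_const_mul]
  field_simp

lemma eta_h (τ a b : ℝ) (h : 0 < a ^ 2 + b ^ 2) :
    Real.sqrt (Real.pi * Real.exp 1 / 2) * τ * hfun τ a b
      = Real.exp ((1 - (τ / Real.sqrt (a ^ 2 + b ^ 2)) ^ 2) / 2) *
          ((τ / Real.sqrt (a ^ 2 + b ^ 2)) * (1 - (τ / Real.sqrt (a ^ 2 + b ^ 2)) ^ 2) *
            (a * b / (a ^ 2 + b ^ 2))) := by
  set r := Real.sqrt (a ^ 2 + b ^ 2) with hrdef
  have hr2 : r ^ 2 = a ^ 2 + b ^ 2 := Real.sq_sqrt h.le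
  have hrpos : 0 < r := Real.sqrt_pos.mpr h
  have h5 : Real.sqrt ((a ^ 2 + b ^ 2) ^ 5) = r ^ 5 := by
    rw [show (a ^ 2 + b ^ 2) ^ 5 = (r ^ 5) ^ 2 by rw [← hr2]; ring,
      Real.sqrt_sq (by positivity)]
  have hexp : Real.exp ((1 - (τ / r) ^ 2) / 2)
      = Real.exp (1/2) * Real.exp (-τ ^ 2 / (2 * (a ^ 2 + b ^ 2))) := by
    rw [← Real.exp_add]
    congr 1
    rw [← hr2]
    field_simp
    ring
  rw [hfun, hexp, h5, ← hr2]
  rw [show Real.sqrt (Real.pi * Real.exp 1 / 2) * τ *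
      (Real.sqrt (2 / Real.pi) * Real.exp (-τ ^ 2 / (2 * (r ^ 2))) *
        (a * b * (r ^ 2 - τ ^ 2) / r ^ 5))
    = (Real.sqrt (Real.pi * Real.exp 1 / 2) * Real.sqrt (2 / Real.pi)) *
        Real.exp (-τ ^ 2 / (2 * (r ^ 2))) * (τ * (a * b * (r ^ 2 - τ ^ 2)) / r ^ 5) by ring,
    sqrt_const_mul]
  field_simp


/-- `f₁` and `f₂`. -/
noncomputable def f1 (w : ℝ) : ℝ := |1 - w ^ 3 * Real.exp ((1 - w ^ 2) / 2)|
noncomputable def f2 (w : ℝ) : ℝ := |1 - w * Real.exp ((1 - w ^ 2) / 2)|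

lemma Ffun_sq_eq (τ a b : ℝ) (h : 0 < a ^ 2 + b ^ 2) :
    Ffun τ a b ^ 2
      = (a ^ 2 / (a ^ 2 + b ^ 2)) *
          (1 - (τ / Real.sqrt (a ^ 2 + b ^ 2)) ^ 3 *
            Real.exp ((1 - (τ / Real.sqrt (a ^ 2 + b ^ 2)) ^ 2) / 2)) ^ 2
        + (b ^ 2 / (a ^ 2 + b ^ 2)) *
          (1 - (τ / Real.sqrt (a ^ 2 + b ^ 2)) *
            Real.exp ((1 - (τ / Real.sqrt (a ^ 2 + b ^ 2)) ^ 2) / 2)) ^ 2 := by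
  rw [Ffun, Real.sq_sqrt (by positivity), eta_g τ a b h, eta_h τ a b h]
  set w := τ / Real.sqrt (a ^ 2 + b ^ 2)
  set E := Real.exp ((1 - w ^ 2) / 2)
  set t := b ^ 2 / (a ^ 2 + b ^ 2) with htdef
  have h1t : a ^ 2 / (a ^ 2 + b ^ 2) = 1 - t := by rw [htdef]; field_simp; ring
  have hab2 : (a * b / (a ^ 2 + b ^ 2)) ^ 2 = t * (1 - t) := by
    rw [← h1t, htdef]; field_simp
  rw [h1t]
  have expand : (E * (w ^ 1 * (1 - t) * w ^ 2 + w * t)) = E * (w ^ 3 * (1 - t) + w * t) := by ring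
  -- goal: (1 - E*(w^3*(1-t) + w*t))^2 + (E*(w*(1-w^2)*(a*b/(a^2+b^2))))^2 = (1-t)*(1-w^3*E)^2 + t*(1-w*E)^2
  have key : (E * (w * (1 - w ^ 2) * (a * b / (a ^ 2 + b ^ 2)))) ^ 2
      = t * (1 - t) * (E * w * (1 - w ^ 2)) ^ 2 := by
    rw [mul_pow, mul_pow, hab2]; ring
  rw [show (1 - E * (w ^ 3 * (1 - t) + w * t)) ^ 2 +
      (E * (w * (1 - w ^ 2) * (a * b / (a ^ 2 + b ^ 2)))) ^ 2
    = (1 - E * (w ^ 3 * (1 - t) + w * t)) ^ 2 + t * (1 - t) * (E * w * (1 - w ^ 2)) ^ 2 from by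
      rw [key]]
  ring

lemma Ffun_le (τ a b : ℝ) (h : 0 < a ^ 2 + b ^ 2) :
    Ffun τ a b ≤ max (f1 (τ / Real.sqrt (a ^ 2 + b ^ 2))) (f2 (τ / Real.sqrt (a ^ 2 + b ^ 2))) := by
  set w := τ / Real.sqrt (a ^ 2 + b ^ 2)
  set M := max (f1 w) (f2 w) with hM
  have hM0 : 0 ≤ M := le_trans (abs_nonneg _) (le_max_left _ _)
  have ht0 : 0 ≤ b ^ 2 / (a ^ 2 + b ^ 2) := by positivity
  have ht1 : b ^ 2 / (a ^ 2 + b ^ 2) ≤ 1 := by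
    rw [div_le_one h]; nlinarith [sq_nonneg a]
  have hs0 : 0 ≤ a ^ 2 / (a ^ 2 + b ^ 2) := by positivity
  have hsum : a ^ 2 / (a ^ 2 + b ^ 2) + b ^ 2 / (a ^ 2 + b ^ 2) = 1 := by field_simp
  have h1 : (1 - w ^ 3 * Real.exp ((1 - w ^ 2) / 2)) ^ 2 ≤ M ^ 2 := by
    rw [← sq_abs]
    exact pow_le_pow_left₀ (abs_nonneg _) (le_max_left _ _) 2
  have h2 : (1 - w * Real.exp ((1 - w ^ 2) / 2)) ^ 2 ≤ M ^ 2 := by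
    rw [← sq_abs]
    exact pow_le_pow_left₀ (abs_nonneg _) (le_max_right _ _) 2
  have hsq : Ffun τ a b ^ 2 ≤ M ^ 2 := by
    rw [Ffun_sq_eq τ a b h]
    calc a ^ 2 / (a ^ 2 + b ^ 2) * (1 - w ^ 3 * Real.exp ((1 - w ^ 2) / 2)) ^ 2
          + b ^ 2 / (a ^ 2 + b ^ 2) * (1 - w * Real.exp ((1 - w ^ 2) / 2)) ^ 2
        ≤ a ^ 2 / (a ^ 2 + b ^ 2) * M ^ 2 + b ^ 2 / (a ^ 2 + b ^ 2) * M ^ 2 := by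
          gcongr
      _ = M ^ 2 := by rw [← add_mul, hsum, one_mul]
  have hF0 : 0 ≤ Ffun τ a b := Real.sqrt_nonneg _
  nlinarith

lemma Ffun_a0 (τ c : ℝ) (hc : 0 < c) : Ffun τ c 0 = f1 (τ / c) := by
  have h : 0 < c ^ 2 + (0:ℝ) ^ 2 := by positivity
  have hs : Real.sqrt (c ^ 2 + 0 ^ 2) = c := by
    rw [show c ^ 2 + (0:ℝ) ^ 2 = c ^ 2 by ring, Real.sqrt_sq hc.le]
  have := Ffun_sq_eq τ c 0 h
  rw [hs] at this
  have h2 : Ffun τ c 0 ^ 2 = (1 - (τ / c) ^ 3 * Real.exp ((1 - (τ / c) ^ 2) / 2)) ^ 2 := by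
    rw [this]; field_simp; ring
  have hF0 : 0 ≤ Ffun τ c 0 := Real.sqrt_nonneg _
  rw [f1, ← Real.sqrt_sq hF0, h2, Real.sqrt_sq_eq_abs]

lemma Ffun_b0 (τ c : ℝ) (hc : 0 < c) : Ffun τ 0 c = f2 (τ / c) := by
  have h : 0 < (0:ℝ) ^ 2 + c ^ 2 := by positivity
  have hs : Real.sqrt ((0:ℝ) ^ 2 + c ^ 2) = c := by
    rw [show (0:ℝ) ^ 2 + c ^ 2 = c ^ 2 by ring, Real.sqrt_sq hc.le]
  have := Ffun_sq_eq τ 0 c h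
  rw [hs] at this
  have h2 : Ffun τ 0 c ^ 2 = (1 - (τ / c) * Real.exp ((1 - (τ / c) ^ 2) / 2)) ^ 2 := by
    rw [this]; field_simp; ring
  have hF0 : 0 ≤ Ffun τ 0 c := Real.sqrt_nonneg _
  rw [f2, ← Real.sqrt_sq hF0, h2, Real.sqrt_sq_eq_abs]


/-- Maximization of the contraction factor: for `0 < α ≤ β` and `τ > 0`,
`sup_{α² ≤ a²+b² ≤ β²} F(a,b)` equals the maximum of
`max_{w ∈ [τ/β, τ/α]} |1 - w³ e^{(1-w²)/2}|` and
`max_{w ∈ [τ/β, τ/α]} |1 - w e^{(1-w²)/2}|`. -/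
theorem stmt15 (τ α β : ℝ) (hτ : 0 < τ) (hα : 0 < α) (hαβ : α ≤ β) :
    sSup ((fun p : ℝ × ℝ => Ffun τ p.1 p.2) ''
        {p : ℝ × ℝ | α ^ 2 ≤ p.1 ^ 2 + p.2 ^ 2 ∧ p.1 ^ 2 + p.2 ^ 2 ≤ β ^ 2})
      = max
          (sSup ((fun w : ℝ => |1 - w ^ 3 * Real.exp ((1 - w ^ 2) / 2)|) ''
            Set.Icc (τ / β) (τ / α)))
          (sSup ((fun w : ℝ => |1 - w * Real.exp ((1 - w ^ 2) / 2)|) ''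
            Set.Icc (τ / β) (τ / α))) := by
  have hβ : 0 < β := lt_of_lt_of_le hα hαβ
  have hf1 : (fun w : ℝ => |1 - w ^ 3 * Real.exp ((1 - w ^ 2) / 2)|) = f1 := rfl
  have hf2 : (fun w : ℝ => |1 - w * Real.exp ((1 - w ^ 2) / 2)|) = f2 := rfl
  rw [hf1, hf2]
  set K := Set.Icc (τ / β) (τ / α) with hK
  set A := ((fun p : ℝ × ℝ => Ffun τ p.1 p.2) ''
      {p : ℝ × ℝ | α ^ 2 ≤ p.1 ^ 2 + p.2 ^ 2 ∧ p.1 ^ 2 + p.2 ^ 2 ≤ β ^ 2}) with hA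
  have hKle : τ / β ≤ τ / α := by gcongr
  have hKne : K.Nonempty := Set.nonempty_Icc.mpr hKle
  have hc1 : Continuous f1 := by unfold f1; fun_prop
  have hc2 : Continuous f2 := by unfold f2; fun_prop
  have hB1c : IsCompact (f1 '' K) := isCompact_Icc.image hc1
  have hB2c : IsCompact (f2 '' K) := isCompact_Icc.image hc2
  have hB1ne : (f1 '' K).Nonempty := hKne.image _
  have hB2ne : (f2 '' K).Nonempty := hKne.image _
  set M := max (sSup (f1 '' K)) (sSup (f2 '' K)) with hM
  have hM0 : 0 ≤ M := by
    obtain ⟨w, hw⟩ := hKne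
    exact le_trans (le_trans (abs_nonneg _)
      (le_csSup hB1c.bddAbove (Set.mem_image_of_mem f1 hw))) (le_max_left _ _)
  -- membership of w in K
  have hwmem : ∀ p : ℝ × ℝ, α ^ 2 ≤ p.1 ^ 2 + p.2 ^ 2 → p.1 ^ 2 + p.2 ^ 2 ≤ β ^ 2 →
      τ / Real.sqrt (p.1 ^ 2 + p.2 ^ 2) ∈ K := by
    intro p h1 h2
    have hr1 : α ≤ Real.sqrt (p.1 ^ 2 + p.2 ^ 2) := by
      rw [← Real.sqrt_sq hα.le]
      exact Real.sqrt_le_sqrt h1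
    have hr2 : Real.sqrt (p.1 ^ 2 + p.2 ^ 2) ≤ β := by
      rw [← Real.sqrt_sq hβ.le]
      exact Real.sqrt_le_sqrt h2
    have hrpos : 0 < Real.sqrt (p.1 ^ 2 + p.2 ^ 2) := lt_of_lt_of_le hα hr1
    constructor
    · gcongr
    · gcongr
  -- upper bound on A
  have hub : ∀ x ∈ A, x ≤ M := by
    rintro x ⟨p, ⟨h1, h2⟩, rfl⟩
    have hpos : 0 < p.1 ^ 2 + p.2 ^ 2 := lt_of_lt_of_le (by positivity) h1
    have hw := hwmem p h1 h2
    refine le_trans (Ffun_le τ p.1 p.2 hpos) (max_le_max ?_ ?_)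
    · exact le_csSup hB1c.bddAbove (Set.mem_image_of_mem f1 hw)
    · exact le_csSup hB2c.bddAbove (Set.mem_image_of_mem f2 hw)
  have hAbdd : BddAbove A := ⟨M, fun x hx => hub x hx⟩
  refine le_antisymm (Real.sSup_le hub hM0) (max_le ?_ ?_)
  · obtain ⟨w, hwK, hwv⟩ := hB1c.sSup_mem hB1ne
    have hw0 : 0 < w := lt_of_lt_of_le (by positivity) hwK.1
    have hc : 0 < τ / w := by positivity
    have hcα : α ≤ τ / w := by
      rw [le_div_iff₀ hw0]
      calc α * w ≤ α * (τ / α) := by gcongr; exact hwK.2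
        _ = τ := by field_simp
    have hcβ : τ / w ≤ β := by
      rw [div_le_iff₀ hw0]
      calc τ = β * (τ / β) := by field_simp
        _ ≤ β * w := by gcongr; exact hwK.1
    have hmem : ((τ / w, 0) : ℝ × ℝ) ∈
        {p : ℝ × ℝ | α ^ 2 ≤ p.1 ^ 2 + p.2 ^ 2 ∧ p.1 ^ 2 + p.2 ^ 2 ≤ β ^ 2} := by
      constructor <;> simp only [] <;> nlinarith
    have hval : Ffun τ (τ / w) 0 = f1 w := by
      rw [Ffun_a0 τ (τ / w) hc, div_div_cancel₀ hτ.ne']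
    rw [← hwv, ← hval]
    exact le_csSup hAbdd ⟨(τ / w, 0), hmem, rfl⟩
  · obtain ⟨w, hwK, hwv⟩ := hB2c.sSup_mem hB2ne
    have hw0 : 0 < w := lt_of_lt_of_le (by positivity) hwK.1
    have hc : 0 < τ / w := by positivity
    have hcα : α ≤ τ / w := by
      rw [le_div_iff₀ hw0]
      calc α * w ≤ α * (τ / α) := by gcongr; exact hwK.2
        _ = τ := by field_simp
    have hcβ : τ / w ≤ β := by
      rw [div_le_iff₀ hw0]
      calc τ = β * (τ / β) := by field_simp
        _ ≤ β * w := by gcongr; exact hwK.1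
    have hmem : ((0, τ / w) : ℝ × ℝ) ∈
        {p : ℝ × ℝ | α ^ 2 ≤ p.1 ^ 2 + p.2 ^ 2 ∧ p.1 ^ 2 + p.2 ^ 2 ≤ β ^ 2} := by
      constructor <;> simp only [] <;> nlinarith
    have hval : Ffun τ 0 (τ / w) = f2 w := by
      rw [Ffun_b0 τ (τ / w) hc, div_div_cancel₀ hτ.ne']
    rw [← hwv, ← hval]
    exact le_csSup hAbdd ⟨(0, τ / w), hmem, rfl⟩
end
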